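/- For the exponential kernel k(t,x) = x^{-1}e^{-t/x} with base measure λ(dx) = (2√π)^{-1} x^{-1/2} e^{-1/x} dx, the posterior-tilted first moment satisfies T^{-1/2} ∫_{ℝ⁺} (1-e^{-T/x}) [γ + n(1 - e^{-Y/x})]^{-(1-σ)} (2√π)^{-1} x^{-1/2} e^{-1/x} dx → γ^{-(1-σ)} as T → ∞, for any fixed n ≥ 0, Y > 0, γ > 0 and σ ∈ [0,1). In particular the posterior mean cumulative hazard is asymptotically equal to the prior one. -/

import Mathlib

open MeasureTheory Filter Set Topology


lemma int_h : IntegrableOn (fun y : ℝ => (1 - Real.exp (-y)) * y ^ (-(3:ℝ)/2)) (Ioi 0) := by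
  rw [← Ioc_union_Ioi_eq_Ioi (zero_le_one)]
  have hmeas : Measurable (fun y : ℝ => (1 - Real.exp (-y)) * y ^ (-(3:ℝ)/2)) := by
    fun_prop
  apply IntegrableOn.union
  · have hint : IntegrableOn (fun y : ℝ => y ^ (-(1:ℝ)/2)) (Ioc (0:ℝ) 1) := by
      have := intervalIntegral.intervalIntegrable_rpow' (a := 0) (b := 1)
        (r := -(1:ℝ)/2) (by norm_num)
      rwa [intervalIntegrable_iff_integrableOn_Ioc_of_le zero_le_one] at this
    refine hint.integrable.mono' hmeas.aestronglyMeasurable ?_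
    filter_upwards [ae_restrict_mem measurableSet_Ioc] with y hy
    have hy0 : 0 < y := hy.1
    have h1 : 1 - Real.exp (-y) ≤ y := by
      have := Real.add_one_le_exp (-y); linarith
    have h0 : 0 ≤ 1 - Real.exp (-y) := by
      have : Real.exp (-y) ≤ 1 := Real.exp_le_one_iff.mpr (by linarith)
      linarith
    rw [Real.norm_eq_abs, abs_of_nonneg (by positivity)]
    calc (1 - Real.exp (-y)) * y ^ (-(3:ℝ)/2) ≤ y * y ^ (-(3:ℝ)/2) := by
          gcongr
      _ = y ^ (-(1:ℝ)/2) := by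
          nth_rewrite 1 [← Real.rpow_one y]
          rw [← Real.rpow_add hy0]; norm_num
  · have hint : IntegrableOn (fun y : ℝ => y ^ (-(3:ℝ)/2)) (Ioi (1:ℝ)) :=
      integrableOn_Ioi_rpow_of_lt (by norm_num) zero_lt_one
    refine hint.integrable.mono' hmeas.aestronglyMeasurable ?_
    filter_upwards [ae_restrict_mem measurableSet_Ioi] with y hy
    have hy0 : (0:ℝ) < y := lt_trans zero_lt_one hy
    have h0 : 0 ≤ 1 - Real.exp (-y) := by
      have : Real.exp (-y) ≤ 1 := Real.exp_le_one_iff.mpr (by linarith)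
      linarith
    rw [Real.norm_eq_abs, abs_of_nonneg (by positivity)]
    have h2 : (1 - Real.exp (-y)) * y ^ (-(3:ℝ)/2) ≤ 1 * y ^ (-(3:ℝ)/2) := by
      gcongr
      linarith [Real.exp_pos (-y)]
    rw [one_mul] at h2
    exact h2


lemma int_h_val' (int_h : IntegrableOn (fun y : ℝ => (1 - Real.exp (-y)) * y ^ (-(3:ℝ)/2)) (Ioi 0)) :
    ∫ y in Ioi (0:ℝ), (1 - Real.exp (-y)) * y ^ (-(3:ℝ)/2) = 2 * Real.sqrt Real.pi := by
  set g : ℝ → ℝ := fun y => Real.exp (-y) * y ^ ((1:ℝ)/2 - 1) with hg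
  have hg_int : IntegrableOn g (Ioi 0) := Real.GammaIntegral_convergent (by norm_num)
  set F : ℝ → ℝ := fun y => -2 * y ^ (-(1:ℝ)/2) * (1 - Real.exp (-y)) with hF
  set F' : ℝ → ℝ := fun y => (1 - Real.exp (-y)) * y ^ (-(3:ℝ)/2) - 2 * g y with hF'
  have hderiv : ∀ y ∈ Ioi (0:ℝ), HasDerivAt F (F' y) y := by
    intro y hy
    have hy0 : (0:ℝ) < y := hy
    have h1 : HasDerivAt (fun y : ℝ => y ^ (-(1:ℝ)/2)) ((-(1:ℝ)/2) * y ^ (-(1:ℝ)/2 - 1)) y :=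
      Real.hasDerivAt_rpow_const (Or.inl hy0.ne')
    have h2 : HasDerivAt (fun y : ℝ => 1 - Real.exp (-y)) (Real.exp (-y)) y := by
      have := ((hasDerivAt_neg y).exp).const_sub 1
      simpa using this
    have h3 := ((h1.const_mul (-2:ℝ)).mul h2)
    refine h3.congr_deriv ?_
    have e1 : y ^ (-(1:ℝ)/2 - 1) = y ^ (-(3:ℝ)/2) := by norm_num
    have e2 : y ^ ((1:ℝ)/2 - 1) = y ^ (-(1:ℝ)/2) := by norm_num
    simp only [hF', hg, e1, e2]
    ring
  have hF'int : IntegrableOn F' (Ioi 0) := int_h.sub (hg_int.const_mul 2)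
  have hcont : ContinuousWithinAt F (Ici 0) 0 := by
    have hF0 : F 0 = 0 := by simp [hF]
    rw [ContinuousWithinAt, hF0]
    apply squeeze_zero_norm' (a := fun y => 2 * y ^ ((1:ℝ)/2))
    · filter_upwards [self_mem_nhdsWithin] with y (hy : y ∈ Ici (0:ℝ))
      rcases eq_or_lt_of_le (mem_Ici.mp hy) with h | h
      · simp [hF, ← h]
      · have hy0 : (0:ℝ) < y := h
        have hle : 1 - Real.exp (-y) ≤ y := by
          have := Real.add_one_le_exp (-y); linarith
        have h0 : 0 ≤ 1 - Real.exp (-y) := by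
          have : Real.exp (-y) ≤ 1 := Real.exp_le_one_iff.mpr (by linarith)
          linarith
        have : ‖F y‖ = 2 * y ^ (-(1:ℝ)/2) * (1 - Real.exp (-y)) := by
          simp only [hF, Real.norm_eq_abs]
          rw [show (-2:ℝ) * y ^ (-(1:ℝ)/2) * (1 - Real.exp (-y)) =
            -(2 * y ^ (-(1:ℝ)/2) * (1 - Real.exp (-y))) by ring, abs_neg,
            abs_of_nonneg (by positivity)]
        rw [this]
        calc 2 * y ^ (-(1:ℝ)/2) * (1 - Real.exp (-y)) ≤ 2 * y ^ (-(1:ℝ)/2) * y := by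
              gcongr
          _ = 2 * y ^ ((1:ℝ)/2) := by
              nth_rewrite 2 [← Real.rpow_one y]
              rw [mul_assoc, ← Real.rpow_add hy0]; norm_num
    · have hc : Tendsto (fun y : ℝ => y ^ ((1:ℝ)/2)) (𝓝[Ici 0] 0) (𝓝 ((0:ℝ) ^ ((1:ℝ)/2))) :=
        (Real.continuousAt_rpow_const 0 _ (Or.inr (by norm_num))).continuousWithinAt
      have h2 := hc.const_mul (2:ℝ)
      rw [Real.zero_rpow (by norm_num : ((1:ℝ)/2) ≠ 0), mul_zero] at h2
      exact h2
  have htop : Tendsto F atTop (𝓝 0) := by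
    have h1 : Tendsto (fun y : ℝ => -2 * y ^ (-(1:ℝ)/2)) atTop (𝓝 (-2 * 0)) := by
      apply Tendsto.const_mul
      have := tendsto_rpow_neg_atTop (y := (1:ℝ)/2) (by norm_num)
      simpa [neg_div] using this
    have h2 : Tendsto (fun y : ℝ => 1 - Real.exp (-y)) atTop (𝓝 (1 - 0)) := by
      apply Tendsto.const_sub
      exact Real.tendsto_exp_comp_nhds_zero.mpr (tendsto_neg_atTop_atBot)
    rw [hF]
    have h3 := h1.mul h2
    simpa only [mul_zero, zero_mul] using h3
  have key : ∫ y in Ioi (0:ℝ), F' y = 0 - F 0 :=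
    integral_Ioi_of_hasDerivAt_of_tendsto hcont hderiv hF'int htop
  have hF0 : F 0 = 0 := by simp [hF]
  rw [hF0, sub_zero] at key
  have split : ∀ y : ℝ, (1 - Real.exp (-y)) * y ^ (-(3:ℝ)/2) = F' y + 2 * g y := by
    intro y; simp only [hF']; ring
  rw [show (fun y : ℝ => (1 - Real.exp (-y)) * y ^ (-(3:ℝ)/2)) = fun y => F' y + 2 * g y from funext split] at *
  rw [integral_add hF'int (hg_int.const_mul 2), key, zero_add, integral_const_mul]
  have : ∫ y in Ioi (0:ℝ), g y = Real.Gamma (1/2) := (Real.Gamma_eq_integral (by norm_num)).symm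
  rw [this, Real.Gamma_one_half_eq]

lemma int_h_val : ∫ y in Ioi (0:ℝ), (1 - Real.exp (-y)) * y ^ (-(3:ℝ)/2) = 2 * Real.sqrt Real.pi :=
  int_h_val' int_h


lemma cov (T : ℝ) (hT : 0 < T) (g : ℝ → ℝ) :
    ∫ x in Ioi (0:ℝ), g x = ∫ y in Ioi (0:ℝ), (T / y ^ 2) * g (T / y) := by
  have himg : (fun y : ℝ => T / y) '' (Ioi 0) = Ioi 0 := by
    ext x
    constructor
    · rintro ⟨y, hy, rfl⟩
      exact div_pos hT hy
    · intro hx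
      exact ⟨T / x, div_pos hT hx, by field_simp⟩
  have hderiv : ∀ y ∈ Ioi (0:ℝ), HasDerivWithinAt (fun y : ℝ => T / y) (-(T / y ^ 2)) (Ioi 0) y := by
    intro y hy
    have hy0 : (0:ℝ) < y := hy
    have : HasDerivAt (fun y : ℝ => T / y) (T * (-(y ^ 2)⁻¹)) y := by
      simpa [div_eq_mul_inv] using (hasDerivAt_inv hy0.ne').const_mul T
    exact (this.congr_deriv (by ring)).hasDerivWithinAt
  have hinj : InjOn (fun y : ℝ => T / y) (Ioi 0) := by
    intro a ha b hb hab
    have ha0 : (0:ℝ) < a := ha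
    have hb0 : (0:ℝ) < b := hb
    field_simp at hab
    exact hab.symm
  calc ∫ x in Ioi (0:ℝ), g x = ∫ x in (fun y : ℝ => T / y) '' (Ioi 0), g x := by rw [himg]
    _ = ∫ y in Ioi (0:ℝ), |(-(T / y ^ 2))| • g (T / y) :=
        integral_image_eq_integral_abs_deriv_smul measurableSet_Ioi hderiv hinj g
    _ = ∫ y in Ioi (0:ℝ), (T / y ^ 2) * g (T / y) := by
        apply setIntegral_congr_fun measurableSet_Ioi
        intro y hy
        have hy0 : (0:ℝ) < y := hy
        simp only [smul_eq_mul, abs_neg, abs_of_nonneg (show (0:ℝ) ≤ T / y ^ 2 by positivity)]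


/-- For the exponential-kernel generalized gamma model, the posterior-tilted
first moment satisfies
`T^{-1/2} ∫₀^∞ (1-e^{-T/x})[γ+n(1-e^{-Y/x})]^{-(1-σ)} (2√π)⁻¹ x^{-1/2} e^{-1/x} dx
 → γ^{-(1-σ)}` as `T → ∞`. -/
theorem stmt14 (n : ℕ) (Y γ σ : ℝ) (hY : 0 < Y) (hγ : 0 < γ)
    (hσ0 : 0 ≤ σ) (hσ1 : σ < 1) :
    Tendsto (fun T : ℝ => T ^ (-(1:ℝ)/2) *
      ∫ x in Set.Ioi (0:ℝ), (1 - Real.exp (-T / x)) *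
        (γ + n * (1 - Real.exp (-Y / x))) ^ (-(1 - σ)) *
        ((2 * Real.sqrt Real.pi)⁻¹ * x ^ (-(1:ℝ)/2) * Real.exp (-1 / x)))
      atTop (nhds (γ ^ (-(1 - σ)))) := by
  have hπ : (0:ℝ) < Real.sqrt Real.pi := Real.sqrt_pos.mpr Real.pi_pos
  set c : ℝ := (2 * Real.sqrt Real.pi)⁻¹ with hc
  have hc0 : 0 < c := by positivity
  set G : ℝ → ℝ → ℝ := fun T y => c * ((1 - Real.exp (-y)) * y ^ (-(3:ℝ)/2) *
    Real.exp (-y / T) * (γ + n * (1 - Real.exp (-(Y * y) / T))) ^ (-(1 - σ))) with hG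
  set bnd : ℝ → ℝ := fun y => c * ((1 - Real.exp (-y)) * y ^ (-(3:ℝ)/2) * 1 *
    γ ^ (-(1 - σ))) with hbnd
  -- integral of the bound / limit function
  have hbnd_eq : bnd = fun y =>
      (c * γ ^ (-(1 - σ))) * ((1 - Real.exp (-y)) * y ^ (-(3:ℝ)/2)) := by
    funext y; simp only [hbnd]; ring
  have hbnd_int : Integrable bnd (volume.restrict (Ioi 0)) := by
    rw [hbnd_eq]; exact (int_h.const_mul _)
  have hbnd_val : ∫ y in Ioi (0:ℝ), bnd y = γ ^ (-(1 - σ)) := by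
    rw [hbnd_eq]
    rw [integral_const_mul, int_h_val, hc]
    field_simp
  -- Step A : dominated convergence
  have stepA : Tendsto (fun T : ℝ => ∫ y in Ioi (0:ℝ), G T y) atTop
      (𝓝 (γ ^ (-(1 - σ)))) := by
    rw [← hbnd_val]
    apply tendsto_integral_filter_of_dominated_convergence bnd
    · filter_upwards [eventually_ge_atTop (1:ℝ)] with T hT
      apply Measurable.aestronglyMeasurable
      fun_prop
    · filter_upwards [eventually_ge_atTop (1:ℝ)] with T hT
      have hT0 : (0:ℝ) < T := lt_of_lt_of_le zero_lt_one hT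
      filter_upwards [ae_restrict_mem measurableSet_Ioi] with y hy
      have hy0 : (0:ℝ) < y := hy
      have hA : 0 ≤ 1 - Real.exp (-y) := by
        have : Real.exp (-y) ≤ 1 := Real.exp_le_one_iff.mpr (by linarith)
        linarith
      have he2 : Real.exp (-y / T) ≤ 1 := by
        rw [Real.exp_le_one_iff, neg_div]
        exact neg_nonpos.mpr (by positivity)
      have he3 : Real.exp (-(Y * y) / T) ≤ 1 := by
        rw [Real.exp_le_one_iff, neg_div]
        exact neg_nonpos.mpr (by positivity)
      have hbase : γ ≤ γ + n * (1 - Real.exp (-(Y * y) / T)) := by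
        nlinarith [Nat.cast_nonneg (α := ℝ) n]
      have hbase0 : (0:ℝ) < γ + n * (1 - Real.exp (-(Y * y) / T)) :=
        lt_of_lt_of_le hγ hbase
      set A := 1 - Real.exp (-y)
      set B := y ^ (-(3:ℝ)/2)
      set C := Real.exp (-y / T)
      set D := (γ + (n:ℝ) * (1 - Real.exp (-(Y * y) / T))) ^ (-(1 - σ))
      set E := γ ^ (-(1 - σ))
      have hB : 0 ≤ B := Real.rpow_nonneg hy0.le _
      have hC : 0 ≤ C := (Real.exp_pos _).le
      have hD : 0 ≤ D := Real.rpow_nonneg hbase0.le _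
      have hE : 0 ≤ E := Real.rpow_nonneg hγ.le _
      have hDE : D ≤ E := Real.rpow_le_rpow_of_nonpos hγ hbase (by linarith)
      have hGy : G T y = c * (A * B * C * D) := rfl
      have hby : bnd y = c * (A * B * 1 * E) := rfl
      have hG0 : 0 ≤ G T y := by
        rw [hGy]
        exact mul_nonneg hc0.le (mul_nonneg (mul_nonneg (mul_nonneg hA hB) hC) hD)
      rw [Real.norm_eq_abs, abs_of_nonneg hG0, hGy, hby]
      have key : A * B * C * D ≤ A * B * 1 * E := by
        calc A * B * C * D = (A * B) * (C * D) := by ring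
          _ ≤ (A * B) * (1 * E) := by
              refine mul_le_mul_of_nonneg_left ?_ (mul_nonneg hA hB)
              exact mul_le_mul he2 hDE hD zero_le_one
          _ = A * B * 1 * E := by ring
      exact mul_le_mul_of_nonneg_left key hc0.le
    · exact hbnd_int
    · filter_upwards [ae_restrict_mem measurableSet_Ioi] with y hy
      have hy0 : (0:ℝ) < y := hy
      set K : ℝ := c * ((1 - Real.exp (-y)) * y ^ (-(3:ℝ)/2)) with hK
      have t1 : Tendsto (fun T : ℝ => T⁻¹) atTop (𝓝 (0:ℝ)) := tendsto_inv_atTop_zero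
      have hexp : ∀ a : ℝ, Tendsto (fun T : ℝ => Real.exp (a / T)) atTop (𝓝 1) := by
        intro a
        have h0 : Tendsto (fun T : ℝ => a * T⁻¹) atTop (𝓝 0) := by
          simpa using t1.const_mul a
        have h := (Real.continuous_exp.tendsto 0).comp h0
        simp only [Function.comp_def, Real.exp_zero] at h
        refine h.congr fun T => ?_
        rw [div_eq_mul_inv]
      have hexp1 : Tendsto (fun T : ℝ => Real.exp (-y / T)) atTop (𝓝 1) := hexp (-y)
      have hexp2 : Tendsto (fun T : ℝ => Real.exp (-(Y * y) / T)) atTop (𝓝 1) :=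
        hexp (-(Y * y))
      have hbr : Tendsto (fun T : ℝ => (γ + n * (1 - Real.exp (-(Y * y) / T))) ^ (-(1 - σ)))
          atTop (𝓝 (γ ^ (-(1 - σ)))) := by
        have hinner : Tendsto (fun T : ℝ => γ + n * (1 - Real.exp (-(Y * y) / T))) atTop
            (𝓝 γ) := by
          have := ((hexp2.const_sub 1).const_mul (n:ℝ)).const_add γ
          simpa using this
        have hcont : ContinuousAt (fun u : ℝ => u ^ (-(1 - σ))) γ :=
          Real.continuousAt_rpow_const γ _ (Or.inl hγ.ne')
        exact hcont.tendsto.comp hinner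
      have hmain := (hexp1.mul hbr).const_mul K
      have e1 : (fun T : ℝ => G T y) = fun T : ℝ =>
          K * (Real.exp (-y / T) * (γ + n * (1 - Real.exp (-(Y * y) / T))) ^ (-(1 - σ))) := by
        funext T; simp only [hG, hK]; ring
      have e2 : bnd y = K * (1 * γ ^ (-(1 - σ))) := by simp only [hbnd, hK]; ring
      rw [e1, e2]
      exact hmain
  -- Step B : change of variables shows the two expressions agree eventually
  refine stepA.congr' ?_
  filter_upwards [eventually_ge_atTop (1:ℝ)] with T hT
  have hT0 : (0:ℝ) < T := lt_of_lt_of_le zero_lt_one hT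
  have hcov := cov T hT0 (fun x => (1 - Real.exp (-T / x)) *
    (γ + n * (1 - Real.exp (-Y / x))) ^ (-(1 - σ)) *
    (c * x ^ (-(1:ℝ)/2) * Real.exp (-1 / x)))
  rw [hcov, ← integral_const_mul]
  apply setIntegral_congr_fun measurableSet_Ioi
  intro y hy
  have hy0 : (0:ℝ) < y := hy
  have h1 : -T / (T / y) = -y := by field_simp <;> ring
  have h2 : -Y / (T / y) = -(Y * y) / T := by rw [div_div_eq_mul_div]; ring
  have h3 : -1 / (T / y) = -y / T := by field_simp <;> ring
  have h4 : (T / y) ^ (-(1:ℝ)/2) = T ^ (-(1:ℝ)/2) * y ^ ((1:ℝ)/2) := by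
    rw [neg_div, Real.div_rpow hT0.le hy0.le, Real.rpow_neg hy0.le, div_eq_mul_inv, inv_inv]
  have hT1 : T ^ (-(1:ℝ)/2) * T ^ (-(1:ℝ)/2) * T = 1 := by
    have he : (-(1:ℝ)/2) + (-(1:ℝ)/2) = -1 := by norm_num
    rw [← Real.rpow_add hT0, he, Real.rpow_neg_one]
    exact inv_mul_cancel₀ hT0.ne'
  have hy1 : y ^ ((1:ℝ)/2) / y ^ 2 = y ^ (-(3:ℝ)/2) := by
    rw [show (y:ℝ)^2 = y ^ (2:ℝ) by rw [← Real.rpow_natCast y 2]; norm_num,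
      ← Real.rpow_sub hy0]
    norm_num
  simp only [hG]
  rw [h1, h2, h3, h4]
  symm
  calc T ^ (-(1:ℝ)/2) * (T / y ^ 2 * ((1 - Real.exp (-y)) *
        (γ + ↑n * (1 - Real.exp (-(Y * y) / T))) ^ (-(1 - σ)) *
        (c * (T ^ (-(1:ℝ)/2) * y ^ ((1:ℝ)/2)) * Real.exp (-y / T))))
      = (T ^ (-(1:ℝ)/2) * T ^ (-(1:ℝ)/2) * T) * (y ^ ((1:ℝ)/2) / y ^ 2) *
        (c * ((1 - Real.exp (-y)) * Real.exp (-y / T) *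
          (γ + ↑n * (1 - Real.exp (-(Y * y) / T))) ^ (-(1 - σ)))) := by ring
    _ = c * ((1 - Real.exp (-y)) * y ^ (-(3:ℝ)/2) * Real.exp (-y / T) *
        (γ + ↑n * (1 - Real.exp (-(Y * y) / T))) ^ (-(1 - σ))) := by
        rw [hT1, hy1]; ring
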